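/- arXiv:1801.04462 — 2 statements merged into one kernel-verified Lean document; each statement's English description precedes it below -/
import Mathlib

section
/- Fix n odd and ε ∈ (0, 1/2). For all sufficiently large integers k, among balanced Boolean functions f: {0,1}^n → {0,1}, the quantity E[(T_ε f)^k] is maximized by the majority function Maj_n. -/
open Finset

abbrev Cube (n : ℕ) := Fin n → ZMod 2

noncomputable def EE {n : ℕ} (f : Cube n → ℝ) : ℝ := (∑ x : Cube n, f x) / 2 ^ n

def W {n : ℕ} (A : Finset (Fin n)) (x : Cube n) : ℝ := (-1 : ℝ) ^ (∑ i ∈ A, (x i).val)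

noncomputable def fhat {n : ℕ} (f : Cube n → ℝ) (A : Finset (Fin n)) : ℝ :=
  EE (fun x => f x * W A x)

noncomputable def wt {n : ℕ} (ε : ℝ) (z : Cube n) : ℝ :=
  ∏ i, if z i = 0 then 1 - ε else ε

noncomputable def Tnoise {n : ℕ} (ε : ℝ) (f : Cube n → ℝ) (x : Cube n) : ℝ :=
  ∑ z : Cube n, wt ε z * f (x + z)

/-- The majority function: 1 iff more than half of the coordinates are 1. -/
noncomputable def Maj (n : ℕ) : Cube n → ℝ :=
  fun x => if n < 2 * ∑ i, (x i).val then 1 else 0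

/-- Hamming distance. -/
def hamming {n : ℕ} (x y : Cube n) : ℕ :=
  (Finset.univ.filter fun i => x i ≠ y i).card
open scoped Classical

/-- number of ones -/
def wone {n : ℕ} (z : Cube n) : ℕ := ∑ i, (z i).val

lemma zmod2_val_le (a : ZMod 2) : a.val ≤ 1 := by
  have := ZMod.val_lt a; omega

lemma wone_le {n : ℕ} (z : Cube n) : wone z ≤ n := by
  calc wone z ≤ ∑ _i : Fin n, 1 := Finset.sum_le_sum fun i _ => zmod2_val_le (z i)
  _ = n := by simp

lemma add_self_cube {n : ℕ} (v : Cube n) : v + v = 0 := by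
  funext i
  have : ∀ a : ZMod 2, a + a = 0 := by decide
  exact this (v i)

lemma wone_eq_card {n : ℕ} (z : Cube n) :
    wone z = (Finset.univ.filter fun i => z i = 1).card := by
  rw [Finset.card_filter, wone]
  refine Finset.sum_congr rfl fun i _ => ?_
  have : ∀ a : ZMod 2, a.val = if a = 1 then 1 else 0 := by decide
  exact this (z i)

lemma wt_eq {n : ℕ} (ε : ℝ) (z : Cube n) :
    wt ε z = ε ^ wone z * (1 - ε) ^ (n - wone z) := by
  rw [wt, Finset.prod_ite, Finset.prod_const, Finset.prod_const]
  have h1 : (Finset.univ.filter fun i => ¬ z i = 0) = (Finset.univ.filter fun i => z i = 1) := by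
    apply Finset.filter_congr
    intro i _
    have : ∀ a : ZMod 2, (¬ a = 0) ↔ a = 1 := by decide
    simp [this (z i)]
  have h2 : (Finset.univ.filter fun i => z i = 0).card = n - wone z := by
    have := Finset.card_filter_add_card_filter_not (s := (Finset.univ : Finset (Fin n)))
      (p := fun i => z i = 0)
    have hcard : (Finset.univ : Finset (Fin n)).card = n := by simp
    have h3 : (Finset.univ.filter fun i => ¬ z i = 0).card = wone z := by
      rw [h1, wone_eq_card]
    omega
  rw [h1, h2, wone_eq_card, mul_comm]

lemma wt_pos {n : ℕ} {ε : ℝ} (hε0 : 0 < ε) (hε1 : ε < 1/2) (z : Cube n) : 0 < wt ε z := by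
  rw [wt]
  exact Finset.prod_pos fun i _ => by split <;> [linarith; exact hε0]

lemma wt_level_anti {n : ℕ} {ε : ℝ} (hε0 : 0 ≤ ε) (hε : ε ≤ 1 - ε) {j j' : ℕ}
    (hjj' : j ≤ j') (hj'n : j' ≤ n) :
    ε ^ j' * (1 - ε) ^ (n - j') ≤ ε ^ j * (1 - ε) ^ (n - j) := by
  obtain ⟨d, rfl⟩ := Nat.exists_eq_add_of_le hjj'
  have h1ε : (0:ℝ) ≤ 1 - ε := le_trans hε0 hε
  have hnj : n - j = d + (n - (j + d)) := by omega
  rw [hnj, pow_add, pow_add]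
  calc ε ^ j * ε ^ d * (1 - ε) ^ (n - (j + d))
      ≤ ε ^ j * (1 - ε) ^ d * (1 - ε) ^ (n - (j + d)) := by
        apply mul_le_mul_of_nonneg_right _ (pow_nonneg h1ε _)
        exact mul_le_mul_of_nonneg_left (pow_le_pow_left₀ hε0 hε d) (pow_nonneg hε0 _)
    _ = ε ^ j * ((1 - ε) ^ d * (1 - ε) ^ (n - (j + d))) := by ring

/-- the Hamming ball -/
def Sstar (n : ℕ) : Finset (Cube n) := Finset.univ.filter fun z => 2 * wone z < n

def onec (n : ℕ) : Cube n := fun _ => 1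

lemma wone_add_one {n : ℕ} (z : Cube n) :
    wone (z + onec n) + wone z = n := by
  have hpt : ∀ a : ZMod 2, (a + 1).val + a.val = 1 := by decide
  rw [wone, wone, ← Finset.sum_add_distrib]
  have : ∀ i : Fin n, ((z + onec n) i).val + (z i).val = 1 := by
    intro i
    have : (z + onec n) i = z i + 1 := rfl
    rw [this]
    exact hpt (z i)
  calc (∑ i, (((z + onec n) i).val + (z i).val)) = ∑ _i : Fin n, 1 :=
        Finset.sum_congr rfl fun i _ => this i
    _ = n := by simp

lemma maj_onec_add {n : ℕ} (z : Cube n) :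
    Maj n (onec n + z) = if 2 * wone z < n then 1 else 0 := by
  have key : (∑ i, ((onec n + z) i).val) + wone z = n := by
    have h1 := wone_add_one z
    rw [add_comm z (onec n)] at h1
    exact h1
  rw [Maj]
  have hle := wone_le z
  by_cases h : 2 * wone z < n
  · rw [if_pos h, if_pos (by omega)]
  · rw [if_neg h, if_neg (by omega)]

lemma card_cube (n : ℕ) : Fintype.card (Cube n) = 2 ^ n := by
  simp [Fintype.card_fun]

lemma card_Sstar {n : ℕ} (hodd : Odd n) : (Sstar n).card = 2 ^ (n - 1) := by
  obtain ⟨m, hm⟩ := hodd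
  have hsplit := Finset.card_filter_add_card_filter_not
    (s := (Finset.univ : Finset (Cube n))) (p := fun z => 2 * wone z < n)
  have huniv : (Finset.univ : Finset (Cube n)).card = 2 ^ n := by
    rw [Finset.card_univ, card_cube]
  have hi : ∀ z ∈ Finset.univ.filter fun z : Cube n => 2 * wone z < n,
      (z + onec n) ∈ Finset.univ.filter fun z : Cube n => ¬ 2 * wone z < n := by
    intro z hz
    simp only [Finset.mem_filter, Finset.mem_univ, true_and] at hz ⊢
    have h1 := wone_add_one z
    omega
  have hj : ∀ z ∈ Finset.univ.filter fun z : Cube n => ¬ 2 * wone z < n,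
      (z + onec n) ∈ Finset.univ.filter fun z : Cube n => 2 * wone z < n := by
    intro z hz
    simp only [Finset.mem_filter, Finset.mem_univ, true_and] at hz ⊢
    have h1 := wone_add_one z
    omega
  have hinv : ∀ z : Cube n, (z + onec n) + onec n = z := by
    intro z
    rw [add_assoc, add_self_cube, add_zero]
  have hbij : (Finset.univ.filter fun z : Cube n => 2 * wone z < n).card =
      (Finset.univ.filter fun z : Cube n => ¬ 2 * wone z < n).card :=
    Finset.card_nbij' (fun z => z + onec n) (fun z => z + onec n) hi hj
      (fun z _ => hinv z) (fun z _ => hinv z)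
  rw [Sstar]
  have hpow : 2 ^ n = 2 * 2 ^ (n - 1) := by
    rw [← pow_succ']
    congr 1
    omega
  omega

lemma sum_wt_le_gap {n : ℕ} {ε : ℝ} (hε0 : 0 < ε) (hε1 : ε < 1/2) (hodd : Odd n)
    (S : Finset (Cube n)) (hcard : S.card = 2 ^ (n - 1)) (hne : S ≠ Sstar n) :
    ∑ z ∈ S, wt ε z ≤ (∑ z ∈ Sstar n, wt ε z) -
      (ε ^ (n / 2) * (1 - ε) ^ (n - n / 2) - ε ^ (n / 2 + 1) * (1 - ε) ^ (n - (n / 2 + 1))) := by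
  obtain ⟨m, hm⟩ := hodd
  have hh : n / 2 = m := by omega
  set h := n / 2 with hdef
  set a := ε ^ (h + 1) * (1 - ε) ^ (n - (h + 1)) with hadef
  set b := ε ^ h * (1 - ε) ^ (n - h) with hbdef
  have hε0' : (0:ℝ) ≤ ε := le_of_lt hε0
  have hεle : ε ≤ 1 - ε := by linarith
  have h1ε : (0:ℝ) ≤ 1 - ε := by linarith
  have hba : 0 ≤ b - a := by
    apply sub_nonneg.mpr
    exact wt_level_anti hε0' hεle (Nat.le_succ h) (by omega)
  -- cardinalities
  have hcardeq : (S \ Sstar n).card = (Sstar n \ S).card := by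
    have h1 := Finset.card_sdiff_add_card_inter S (Sstar n)
    have h2 := Finset.card_sdiff_add_card_inter (Sstar n) S
    rw [Finset.inter_comm] at h2
    have h3 : (Sstar n).card = 2 ^ (n - 1) := card_Sstar ⟨m, hm⟩
    omega
  have hAne : (S \ Sstar n).Nonempty := by
    rw [Finset.sdiff_nonempty]
    intro hsub
    exact hne (Finset.eq_of_subset_of_card_le hsub (by rw [hcard, card_Sstar ⟨m, hm⟩]))
  have hA : ∑ z ∈ S \ Sstar n, wt ε z ≤ (S \ Sstar n).card • a := by
    apply Finset.sum_le_card_nsmul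
    intro z hz
    rw [Finset.mem_sdiff, Sstar, Finset.mem_filter] at hz
    have hw : h + 1 ≤ wone z := by
      have := hz.2
      simp only [Finset.mem_univ, true_and] at this
      omega
    rw [wt_eq]
    exact wt_level_anti hε0' hεle hw (wone_le z)
  have hB : (Sstar n \ S).card • b ≤ ∑ z ∈ Sstar n \ S, wt ε z := by
    apply Finset.card_nsmul_le_sum
    intro z hz
    rw [Finset.mem_sdiff, Sstar, Finset.mem_filter] at hz
    have hw : wone z ≤ h := by
      have := hz.1.2
      omega
    rw [wt_eq]
    exact wt_level_anti hε0' hεle hw (by omega)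
  have hm1 : 1 ≤ (S \ Sstar n).card := Finset.card_pos.mpr hAne
  have hsplit1 : ∑ z ∈ S ∩ Sstar n, wt ε z + ∑ z ∈ S \ Sstar n, wt ε z = ∑ z ∈ S, wt ε z :=
    Finset.sum_inter_add_sum_sdiff S (Sstar n) _
  have hsplit2 : ∑ z ∈ Sstar n ∩ S, wt ε z + ∑ z ∈ Sstar n \ S, wt ε z
      = ∑ z ∈ Sstar n, wt ε z := Finset.sum_inter_add_sum_sdiff (Sstar n) S _
  rw [Finset.inter_comm] at hsplit2
  have hsmul : ∀ (c : ℕ) (x : ℝ), c • x = (c : ℝ) * x := fun c x => nsmul_eq_mul c x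
  rw [hsmul] at hA hB
  have hcardR : ((S \ Sstar n).card : ℝ) = ((Sstar n \ S).card : ℝ) := by
    exact_mod_cast hcardeq
  have hone : (1:ℝ) ≤ ((S \ Sstar n).card : ℝ) := by exact_mod_cast hm1
  rw [← hcardeq] at hB
  have key : (1:ℝ) * (b - a) ≤ ((S \ Sstar n).card : ℝ) * (b - a) :=
    mul_le_mul_of_nonneg_right hone hba
  nlinarith [key, hA, hB, hsplit1, hsplit2]


lemma tnoise_eq_sum_filter {n : ℕ} (ε : ℝ) {f : Cube n → ℝ}
    (hf : ∀ x, f x = 0 ∨ f x = 1) (x : Cube n) :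
    Tnoise ε f x = ∑ z ∈ Finset.univ.filter fun z => f (x + z) = 1, wt ε z := by
  rw [Tnoise, ← Finset.sum_filter_add_sum_filter_not Finset.univ (fun z => f (x + z) = 1)]
  have h2 : ∑ z ∈ Finset.univ.filter fun z => ¬ f (x + z) = 1, wt ε z * f (x + z) = 0 := by
    apply Finset.sum_eq_zero
    intro z hz
    rw [Finset.mem_filter] at hz
    rcases hf (x + z) with h | h
    · rw [h, mul_zero]
    · exact absurd h hz.2
  have h1 : ∑ z ∈ Finset.univ.filter fun z => f (x + z) = 1, wt ε z * f (x + z)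
      = ∑ z ∈ Finset.univ.filter fun z => f (x + z) = 1, wt ε z := by
    apply Finset.sum_congr rfl
    intro z hz
    rw [Finset.mem_filter] at hz
    rw [hz.2, mul_one]
  rw [h1, h2, add_zero]

lemma card_filter_balanced {n : ℕ} {f : Cube n → ℝ} (hn : 1 ≤ n)
    (hf : ∀ x, f x = 0 ∨ f x = 1) (hbal : EE f = 1/2) (x : Cube n) :
    (Finset.univ.filter fun z => f (x + z) = 1).card = 2 ^ (n - 1) := by
  have hsum : ∑ y : Cube n, f y = ((Finset.univ.filter fun y => f y = 1).card : ℝ) := by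
    rw [Finset.card_filter]
    push_cast
    apply Finset.sum_congr rfl
    intro y _
    rcases hf y with h | h <;> simp [h]
  have hbal' : ((Finset.univ.filter fun y => f y = 1).card : ℝ) = 2 ^ (n - 1) := by
    rw [EE, hsum] at hbal
    have h2n : (2:ℝ) ^ n = 2 ^ (n - 1) * 2 := by
      rw [← pow_succ]
      congr 1
      omega
    have hne : (2:ℝ) ^ n ≠ 0 := by positivity
    field_simp at hbal
    rw [h2n] at hbal
    linarith
  have hcard1 : (Finset.univ.filter fun y => f y = 1).card = 2 ^ (n - 1) := by
    have : ((Finset.univ.filter fun y => f y = 1).card : ℝ) = ((2 ^ (n - 1) : ℕ) : ℝ) := by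
      rw [hbal']
      push_cast
      ring
    exact_mod_cast this
  rw [← hcard1]
  apply Finset.card_nbij' (fun z => x + z) (fun y => x + y)
  · intro z hz
    simp only [Finset.mem_coe, Finset.mem_filter, Finset.mem_univ, true_and] at hz ⊢
    exact hz
  · intro y hy
    simp only [Finset.mem_coe, Finset.mem_filter, Finset.mem_univ, true_and] at hy ⊢
    rw [← add_assoc, add_self_cube, zero_add]
    exact hy
  · intro z _
    simp only [← add_assoc, add_self_cube, zero_add]
  · intro y _
    simp only [← add_assoc, add_self_cube, zero_add]

lemma eq_shift {n : ℕ} {f : Cube n → ℝ} (hf : ∀ x, f x = 0 ∨ f x = 1) (x : Cube n)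
    (hx : (Finset.univ.filter fun z => f (x + z) = 1) = Sstar n) :
    ∀ y, f y = Maj n (y + (x + onec n)) := by
  intro y
  have hmem : f (x + (x + y)) = 1 ↔ 2 * wone (x + y) < n := by
    constructor
    · intro h
      have : (x + y) ∈ (Finset.univ.filter fun z => f (x + z) = 1) := by
        simp only [Finset.mem_filter, Finset.mem_univ, true_and]
        exact h
      rw [hx, Sstar, Finset.mem_filter] at this
      exact this.2
    · intro h
      have : (x + y) ∈ Sstar n := by
        rw [Sstar, Finset.mem_filter]
        exact ⟨Finset.mem_univ _, h⟩
      rw [← hx, Finset.mem_filter] at this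
      exact this.2
  have hxy : x + (x + y) = y := by rw [← add_assoc, add_self_cube, zero_add]
  rw [hxy] at hmem
  have hmaj : Maj n (y + (x + onec n)) = if 2 * wone (x + y) < n then 1 else 0 := by
    have harr : y + (x + onec n) = onec n + (x + y) := by
      rw [← add_assoc, add_comm y x]
      rw [add_comm (x + y) (onec n)]
    rw [harr, maj_onec_add]
  rw [hmaj]
  by_cases h : 2 * wone (x + y) < n
  · rw [if_pos h]
    exact hmem.mpr h
  · rw [if_neg h]
    rcases hf y with h0 | h1
    · exact h0
    · exact absurd (hmem.mp h1) h

lemma tnoise_shift {n : ℕ} (ε : ℝ) (g : Cube n → ℝ) (a x : Cube n) :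
    Tnoise ε (fun y => g (y + a)) x = Tnoise ε g (x + a) := by
  rw [Tnoise, Tnoise]
  apply Finset.sum_congr rfl
  intro z _
  congr 1
  rw [add_right_comm]

lemma sum_pow_shift {n : ℕ} (k : ℕ) (F : Cube n → ℝ) (a : Cube n) :
    ∑ x : Cube n, F (x + a) = ∑ x : Cube n, F x :=
  Fintype.sum_bijective (· + a) (Equiv.addRight a).bijective _ _ (fun _ => rfl)

lemma tnoise_nonneg {n : ℕ} {ε : ℝ} (hε0 : 0 < ε) (hε1 : ε < 1/2) {f : Cube n → ℝ}
    (hf : ∀ x, f x = 0 ∨ f x = 1) (x : Cube n) : 0 ≤ Tnoise ε f x := by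
  rw [Tnoise]
  apply Finset.sum_nonneg
  intro z _
  apply mul_nonneg (le_of_lt (wt_pos hε0 hε1 z))
  rcases hf (x + z) with h | h <;> rw [h] <;> norm_num

lemma maj_boolean (n : ℕ) : ∀ x, Maj n x = 0 ∨ Maj n x = 1 := by
  intro x
  rw [Maj]
  split <;> simp

/-- for n odd and ε fixed, for all sufficiently large k, the majority function
maximizes E[(T_ε f)^k] among balanced Boolean functions. -/
theorem majority_maximizes_high_moments (n : ℕ) (hodd : Odd n) (ε : ℝ)
    (hε₀ : 0 < ε) (hε₁ : ε < 1/2) :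
    ∃ K : ℕ, ∀ k : ℕ, K ≤ k →
      ∀ f : Cube n → ℝ, (∀ x, f x = 0 ∨ f x = 1) → EE f = 1/2 →
        EE (fun x => Tnoise ε f x ^ k) ≤ EE (fun x => Tnoise ε (Maj n) x ^ k) := by
  classical
  obtain ⟨m, hm⟩ := id hodd
  have hn1 : 1 ≤ n := by omega
  set Mstar : ℝ := ∑ z ∈ Sstar n, wt ε z with hMdef
  set a : ℝ := ε ^ (n / 2 + 1) * (1 - ε) ^ (n - (n / 2 + 1)) with hadef
  set b : ℝ := ε ^ (n / 2) * (1 - ε) ^ (n - n / 2) with hbdef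
  have hzero_mem : (0 : Cube n) ∈ Sstar n := by
    rw [Sstar, Finset.mem_filter]
    refine ⟨Finset.mem_univ _, ?_⟩
    have : wone (0 : Cube n) = 0 := by
      rw [wone]
      simp
    omega
  have hMpos : 0 < Mstar := Finset.sum_pos (fun z _ => wt_pos hε₀ hε₁ z) ⟨0, hzero_mem⟩
  -- gap positivity
  have ha' : a = (ε ^ m * (1 - ε) ^ m) * ε := by
    rw [hadef, show n / 2 = m by omega, show n - (m + 1) = m by omega, pow_succ]
    ring
  have hb' : b = (ε ^ m * (1 - ε) ^ m) * (1 - ε) := by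
    rw [hbdef, show n / 2 = m by omega, show n - m = m + 1 by omega, pow_succ]
    ring
  have h1e : (0:ℝ) < 1 - ε := by linarith
  have hprodpos : 0 < ε ^ m * (1 - ε) ^ m := mul_pos (pow_pos hε₀ m) (pow_pos h1e m)
  have hgap : a < b := by
    rw [ha', hb']
    exact mul_lt_mul_of_pos_left (by linarith) hprodpos
  have ha0 : 0 ≤ a := le_of_lt (by rw [ha']; exact mul_pos hprodpos hε₀)
  -- b ≤ Mstar : witness of weight n/2
  have hbleM : b ≤ Mstar := by
    set zh : Cube n := fun i => if (i : ℕ) < m then 1 else 0 with hzh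
    have hwzh : wone zh = m := by
      rw [wone]
      have hval : ∀ i : Fin n, ((zh i).val) = if (i : ℕ) < m then 1 else 0 := by
        intro i
        by_cases h : (i : ℕ) < m
        · simp only [hzh, if_pos h]
          decide
        · simp only [hzh, if_neg h]
          decide
      rw [Finset.sum_congr rfl fun i _ => hval i]
      rw [Fin.sum_univ_eq_sum_range (fun j => if j < m then 1 else 0) n]
      rw [← Finset.card_filter]
      have : (Finset.range n).filter (fun j => j < m) = Finset.range m := by
        ext j
        simp only [Finset.mem_filter, Finset.mem_range]
        omega
      rw [this]
      simp
    have hmem : zh ∈ Sstar n := by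
      rw [Sstar, Finset.mem_filter]
      exact ⟨Finset.mem_univ _, by omega⟩
    have : wt ε zh = b := by
      rw [wt_eq, hwzh, hbdef, show n / 2 = m by omega]
    rw [← this]
    exact Finset.single_le_sum (fun z _ => le_of_lt (wt_pos hε₀ hε₁ z)) hmem
  set c : ℝ := Mstar - (b - a) with hcdef
  have hc0 : 0 ≤ c := by rw [hcdef]; linarith
  have hclt : c < Mstar := by rw [hcdef]; linarith
  set r : ℝ := c / Mstar with hrdef
  have hr0 : 0 ≤ r := div_nonneg hc0 hMpos.le
  have hr1 : r < 1 := (div_lt_one hMpos).mpr hclt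
  have ht := tendsto_pow_atTop_nhds_zero_of_lt_one hr0 hr1
  have hev : ∀ᶠ k in Filter.atTop, r ^ k < (1/2 : ℝ) ^ n :=
    ht.eventually (gt_mem_nhds (by positivity))
  obtain ⟨K, hK⟩ := Filter.eventually_atTop.mp hev
  refine ⟨K, fun k hk f hfB hfbal => ?_⟩
  -- the value of T Maj at the all-ones point
  have hMaj_onec : Tnoise ε (Maj n) (onec n) = Mstar := by
    rw [tnoise_eq_sum_filter ε (maj_boolean n) (onec n)]
    congr 1
    ext z
    rw [Finset.mem_filter, Sstar, Finset.mem_filter, maj_onec_add]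
    by_cases h : 2 * wone z < n
    · simp [h]
    · simp [h]
  by_cases hcase : ∃ x, (Finset.univ.filter fun z => f (x + z) = 1) = Sstar n
  · -- f is a shift of Majority: equality
    obtain ⟨x, hx⟩ := hcase
    have hsh := eq_shift hfB x hx
    have hfe : f = fun y => Maj n (y + (x + onec n)) := funext hsh
    apply le_of_eq
    rw [EE, EE]
    congr 1
    calc (∑ w : Cube n, Tnoise ε f w ^ k)
        = ∑ w : Cube n, Tnoise ε (Maj n) (w + (x + onec n)) ^ k := by
          refine Finset.sum_congr rfl fun w _ => ?_
          rw [hfe, tnoise_shift]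
      _ = ∑ w : Cube n, Tnoise ε (Maj n) w ^ k :=
          sum_pow_shift k (fun w => Tnoise ε (Maj n) w ^ k) (x + onec n)
  · push_neg at hcase
    have hub : ∀ x, Tnoise ε f x ≤ c := by
      intro x
      rw [tnoise_eq_sum_filter ε hfB x]
      exact sum_wt_le_gap hε₀ hε₁ hodd _ (card_filter_balanced hn1 hfB hfbal x) (hcase x)
    have hnn : ∀ x, 0 ≤ Tnoise ε f x := tnoise_nonneg hε₀ hε₁ hfB
    have h2n : (0:ℝ) < 2 ^ n := by positivity
    rw [EE, EE]
    apply div_le_div_of_nonneg_right ?_ h2n.le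
    have hL : (∑ x : Cube n, Tnoise ε f x ^ k) ≤ (2:ℝ) ^ n * c ^ k := by
      calc (∑ x : Cube n, Tnoise ε f x ^ k) ≤ ∑ _x : Cube n, c ^ k :=
            Finset.sum_le_sum fun x _ => pow_le_pow_left₀ (hnn x) (hub x) k
        _ = (2:ℝ) ^ n * c ^ k := by
            rw [Finset.sum_const, Finset.card_univ, card_cube, nsmul_eq_mul]
            push_cast
            ring
    have hck : c ^ k = r ^ k * Mstar ^ k := by
      rw [hrdef, ← mul_pow, div_mul_cancel₀ _ hMpos.ne']
    have hmid : (2:ℝ) ^ n * c ^ k ≤ Mstar ^ k := by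
      rw [hck]
      have := mul_le_mul_of_nonneg_right (le_of_lt (hK k hk)) (pow_nonneg hMpos.le k)
      calc (2:ℝ) ^ n * (r ^ k * Mstar ^ k) ≤ (2:ℝ)^n * ((1/2:ℝ)^n * Mstar ^ k) := by
            apply mul_le_mul_of_nonneg_left this (le_of_lt h2n)
        _ = Mstar ^ k := by
            rw [← mul_assoc, ← mul_pow]
            norm_num
    have hR : Mstar ^ k ≤ ∑ x : Cube n, Tnoise ε (Maj n) x ^ k := by
      rw [← hMaj_onec]
      exact Finset.single_le_sum
        (fun x _ => pow_nonneg (tnoise_nonneg hε₀ hε₁ (maj_boolean n) x) k)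
        (Finset.mem_univ (onec n))
    linarith
end

section
/- Let Φ be a convex function and ε ∈ [0,1/2]. For every Boolean function f: {0,1}^n → {0,1} there exists a monotone Boolean function g with E[g] = E[f] such that E[Φ(T_ε f)] ≤ E[Φ(T_ε g)]. -/
open Finset

section Aux
variable {n : ℕ}

lemma zmod2_cases (c : ZMod 2) : c = 0 ∨ c = 1 := by revert c; decide

def eb (i : Fin n) : Cube n := fun j => if j = i then 1 else 0

lemma add_eb_self (x : Cube n) (i : Fin n) : (x + eb i) i = x i + 1 := by simp [eb]

lemma add_eb_ne (x : Cube n) {i j : Fin n} (h : j ≠ i) : (x + eb i) j = x j := by simp [eb, h]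

lemma add_eb_eb (x : Cube n) (i : Fin n) : x + eb i + eb i = x := by
  funext j
  by_cases h : j = i
  · subst h
    have : ∀ c : ZMod 2, c + 1 + 1 = c := by decide
    simpa [eb] using this (x j)
  · simp [eb, h]

lemma bij_eb (i : Fin n) : Function.Bijective (fun z : Cube n => z + eb i) :=
  Function.Involutive.bijective (fun z => add_eb_eb z i)

noncomputable def sh (i : Fin n) (f : Cube n → ℝ) (x : Cube n) : ℝ :=
  if x i = 1 then max (f x) (f (x + eb i)) else min (f x) (f (x + eb i))

lemma sh_boolean (i : Fin n) (f : Cube n → ℝ) (hf : ∀ x, f x = 0 ∨ f x = 1) :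
    ∀ x, sh i f x = 0 ∨ sh i f x = 1 := by
  intro x
  unfold sh
  rcases hf x with h | h <;> rcases hf (x + eb i) with h' | h' <;>
    split <;> simp [h, h'] <;> norm_num

lemma sh_pair (i : Fin n) (f : Cube n → ℝ) (y : Cube n) :
    sh i f y + sh i f (y + eb i) = f y + f (y + eb i) := by
  have hyy : y + eb i + eb i = y := add_eb_eb y i
  rcases zmod2_cases (y i) with h | h
  · have hy' : (y + eb i) i = 1 := by rw [add_eb_self, h]; decide
    unfold sh
    rw [if_neg (by rw [h]; decide), if_pos hy', hyy, max_comm, min_add_max]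
  · have hy' : (y + eb i) i ≠ 1 := by rw [add_eb_self, h]; decide
    unfold sh
    rw [if_pos h, if_neg hy', hyy, min_comm, max_add_min]

lemma sh_sub (i : Fin n) (f : Cube n → ℝ) (y : Cube n) :
    sh i f y - sh i f (y + eb i) =
      (if y i = 1 then (1:ℝ) else -1) * |f y - f (y + eb i)| := by
  have hyy : y + eb i + eb i = y := add_eb_eb y i
  rcases zmod2_cases (y i) with h | h
  · have hy' : (y + eb i) i = 1 := by rw [add_eb_self, h]; decide
    have hne : ¬ (y i = 1) := by rw [h]; decide
    unfold sh
    rw [if_neg hne, if_pos hy', hyy, if_neg hne, min_comm, ← max_sub_min_eq_abs]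
    ring
  · have hy' : (y + eb i) i ≠ 1 := by rw [add_eb_self, h]; decide
    unfold sh
    rw [if_pos h, if_neg hy', hyy, if_pos h, min_comm (f (y + eb i)), max_sub_min_eq_abs, one_mul,
      abs_sub_comm]

lemma pair_convex {Φ : ℝ → ℝ} (hΦ : ConvexOn ℝ Set.univ Φ)
    (a b c d : ℝ) (hsum : a + b = c + d) (habs : |a - b| ≤ |c - d|) :
    Φ a + Φ b ≤ Φ c + Φ d := by
  have key : ∀ a b c d : ℝ, a + b = c + d → c ≤ a → a ≤ b → b ≤ d →
      Φ a + Φ b ≤ Φ c + Φ d := by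
    intro a b c d hsum hca hab hbd
    rcases eq_or_lt_of_le (le_trans hca (le_trans hab hbd)) with heq | hlt
    · have h1 : a = c := le_antisymm (by linarith) hca
      have h2 : b = d := le_antisymm hbd (by linarith)
      rw [h1, h2]
    · set t := (d - a) / (d - c) with ht
      have hdc : 0 < d - c := by linarith
      have ht0 : 0 ≤ t := div_nonneg (by linarith) hdc.le
      have ht1 : t ≤ 1 := by rw [ht, div_le_one hdc]; linarith
      have hta : t * (d - c) = d - a := div_mul_cancel₀ _ hdc.ne'
      have h1 := hΦ.2 (Set.mem_univ c) (Set.mem_univ d) (show (0:ℝ) ≤ t from ht0)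
        (show (0:ℝ) ≤ 1 - t by linarith) (show t + (1 - t) = 1 by ring)
      have h2 := hΦ.2 (Set.mem_univ d) (Set.mem_univ c) (show (0:ℝ) ≤ t from ht0)
        (show (0:ℝ) ≤ 1 - t by linarith) (show t + (1 - t) = 1 by ring)
      simp only [smul_eq_mul] at h1 h2
      have ha : t * c + (1 - t) * d = a := by linear_combination -hta
      have hb : t * d + (1 - t) * c = b := by linear_combination hta - hsum
      rw [ha] at h1; rw [hb] at h2; linarith
  rcases le_total a b with hab | hab <;> rcases le_total c d with hcd | hcd
  · have h1 : b - a ≤ d - c := by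
      rw [abs_of_nonpos (by linarith), abs_of_nonpos (by linarith)] at habs; linarith
    exact key a b c d hsum (by linarith) hab (by linarith)
  · have h1 : b - a ≤ c - d := by
      rw [abs_of_nonpos (by linarith), abs_of_nonneg (by linarith)] at habs; linarith
    have := key a b d c (by linarith) (by linarith) hab (by linarith); linarith
  · have h1 : a - b ≤ d - c := by
      rw [abs_of_nonneg (by linarith), abs_of_nonpos (by linarith)] at habs; linarith
    have := key b a c d (by linarith) (by linarith) hab (by linarith); linarith
  · have h1 : a - b ≤ c - d := by
      rw [abs_of_nonneg (by linarith), abs_of_nonneg (by linarith)] at habs; linarith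
    have := key b a d c (by linarith) (by linarith) hab (by linarith); linarith

end Aux

section Noise
variable {n : ℕ} (ε : ℝ) (i : Fin n)

lemma wt_sign (hε0 : 0 ≤ ε) (hε2 : ε ≤ 1/2) (z : Cube n) :
    (if z i = 0 then (1:ℝ) else -1) * (wt ε z - wt ε (z + eb i)) =
      |wt ε z - wt ε (z + eb i)| := by
  have hP : (0:ℝ) ≤ ∏ j ∈ univ.erase i, (if z j = 0 then 1 - ε else ε) :=
    prod_nonneg fun j _ => by split <;> linarith
  have h1 : wt ε z
      = (if z i = 0 then 1 - ε else ε) * ∏ j ∈ univ.erase i, (if z j = 0 then 1 - ε else ε) :=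
    (mul_prod_erase univ _ (mem_univ i)).symm
  have h2 : wt ε (z + eb i)
      = (if z i = 0 then ε else 1 - ε) * ∏ j ∈ univ.erase i, (if z j = 0 then 1 - ε else ε) := by
    unfold wt
    rw [← mul_prod_erase univ _ (mem_univ i)]
    congr 1
    · rw [add_eb_self]
      rcases zmod2_cases (z i) with h | h <;> rw [h]
      · rw [if_neg (by decide), if_pos rfl]
      · rw [if_pos (by decide), if_neg (by decide)]
    · refine prod_congr rfl fun j hj => ?_
      rw [add_eb_ne _ (mem_erase.mp hj).1]
  rcases zmod2_cases (z i) with h | h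
  · rw [h1, h2, h, if_pos rfl, if_pos rfl, if_pos rfl, one_mul]
    rw [abs_of_nonneg (by nlinarith)]
  · have hne : (1 : ZMod 2) ≠ 0 := by decide
    rw [h1, h2, h, if_neg hne, if_neg hne, if_neg hne]
    rw [abs_of_nonpos (by nlinarith)]
    ring

lemma T_flip (f : Cube n → ℝ) (x : Cube n) :
    Tnoise ε f (x + eb i) = ∑ z : Cube n, wt ε z * f (x + z + eb i) := by
  unfold Tnoise
  refine sum_congr rfl fun z _ => ?_
  rw [add_right_comm]

lemma D_eq (f : Cube n → ℝ) (x : Cube n) :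
    Tnoise ε f x - Tnoise ε f (x + eb i)
      = ∑ z : Cube n, wt ε z * (f (x + z) - f (x + z + eb i)) := by
  rw [T_flip]
  unfold Tnoise
  rw [← sum_sub_distrib]
  exact sum_congr rfl fun z _ => (mul_sub _ _ _).symm

lemma two_D (f : Cube n → ℝ) (x : Cube n) :
    2 * (Tnoise ε f x - Tnoise ε f (x + eb i))
      = ∑ z : Cube n, (wt ε z - wt ε (z + eb i)) * (f (x + z) - f (x + z + eb i)) := by
  have hdd : ∀ y : Cube n, f (y + eb i) - f (y + eb i + eb i) = -(f y - f (y + eb i)) := by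
    intro y; rw [add_eb_eb]; ring
  have hre : ∑ z : Cube n, wt ε z * (f (x + z) - f (x + z + eb i))
      = ∑ z : Cube n, wt ε (z + eb i) * (-(f (x + z) - f (x + z + eb i))) := by
    have h := Fintype.sum_bijective _ (bij_eb i)
      (fun z : Cube n => wt ε (z + eb i) * (f (x + (z + eb i)) - f (x + (z + eb i) + eb i)))
      (fun z : Cube n => wt ε z * (f (x + z) - f (x + z + eb i))) (fun z => rfl)
    rw [← h]
    refine sum_congr rfl fun z _ => ?_
    show wt ε (z + eb i) * (f (x + (z + eb i)) - f (x + (z + eb i) + eb i)) = _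
    rw [← add_assoc, hdd (x + z)]
  calc 2 * (Tnoise ε f x - Tnoise ε f (x + eb i))
      = (∑ z : Cube n, wt ε z * (f (x + z) - f (x + z + eb i)))
        + ∑ z : Cube n, wt ε z * (f (x + z) - f (x + z + eb i)) := by rw [D_eq]; ring
    _ = (∑ z : Cube n, wt ε z * (f (x + z) - f (x + z + eb i)))
        + ∑ z : Cube n, wt ε (z + eb i) * (-(f (x + z) - f (x + z + eb i))) := by rw [← hre]
    _ = ∑ z : Cube n, (wt ε z - wt ε (z + eb i)) * (f (x + z) - f (x + z + eb i)) := by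
        rw [← sum_add_distrib]
        exact sum_congr rfl fun z _ => by ring

lemma D_abs_one (hε0 : 0 ≤ ε) (hε2 : ε ≤ 1/2) (f : Cube n → ℝ) (x : Cube n) (hx : x i = 1) :
    |Tnoise ε f x - Tnoise ε f (x + eb i)|
      ≤ Tnoise ε (sh i f) x - Tnoise ε (sh i f) (x + eb i) := by
  have h2f := two_D ε i f x
  have h2g := two_D ε i (sh i f) x
  have hterm : ∀ z : Cube n,
      (wt ε z - wt ε (z + eb i)) * (sh i f (x + z) - sh i f (x + z + eb i))
        = |wt ε z - wt ε (z + eb i)| * |f (x + z) - f (x + z + eb i)| := by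
    intro z
    rw [sh_sub]
    have hq := wt_sign ε i hε0 hε2 z
    have hxz : (x + z) i = 1 + z i := by rw [Pi.add_apply, hx]
    rcases zmod2_cases (z i) with h | h
    · have h1 : (x + z) i = 1 := by rw [hxz, h, add_zero]
      rw [if_pos h1, one_mul]
      rw [h, if_pos rfl, one_mul] at hq
      rw [← hq]
    · have h1 : (x + z) i ≠ 1 := by rw [hxz, h]; decide
      rw [if_neg h1]
      rw [h, if_neg (by decide)] at hq
      rw [← hq]; ring
  have hgsum : 2 * (Tnoise ε (sh i f) x - Tnoise ε (sh i f) (x + eb i))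
      = ∑ z : Cube n, |wt ε z - wt ε (z + eb i)| * |f (x + z) - f (x + z + eb i)| := by
    rw [h2g]; exact sum_congr rfl fun z _ => hterm z
  have habs : |2 * (Tnoise ε f x - Tnoise ε f (x + eb i))|
      ≤ 2 * (Tnoise ε (sh i f) x - Tnoise ε (sh i f) (x + eb i)) := by
    rw [h2f, hgsum]
    calc |∑ z : Cube n, (wt ε z - wt ε (z + eb i)) * (f (x + z) - f (x + z + eb i))|
        ≤ ∑ z : Cube n, |(wt ε z - wt ε (z + eb i)) * (f (x + z) - f (x + z + eb i))| :=
          Finset.abs_sum_le_sum_abs _ _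
      _ = ∑ z : Cube n, |wt ε z - wt ε (z + eb i)| * |f (x + z) - f (x + z + eb i)| :=
          sum_congr rfl fun z _ => abs_mul _ _
  rw [abs_mul, abs_two] at habs
  linarith [abs_nonneg (Tnoise ε f x - Tnoise ε f (x + eb i))]

lemma D_abs (hε0 : 0 ≤ ε) (hε2 : ε ≤ 1/2) (f : Cube n → ℝ) (x : Cube n) :
    |Tnoise ε f x - Tnoise ε f (x + eb i)|
      ≤ |Tnoise ε (sh i f) x - Tnoise ε (sh i f) (x + eb i)| := by
  rcases zmod2_cases (x i) with h | h
  · have h1 : (x + eb i) i = 1 := by rw [add_eb_self, h]; decide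
    have h2 := D_abs_one ε i hε0 hε2 f (x + eb i) h1
    rw [add_eb_eb] at h2
    calc |Tnoise ε f x - Tnoise ε f (x + eb i)|
        = |Tnoise ε f (x + eb i) - Tnoise ε f x| := abs_sub_comm _ _
      _ ≤ Tnoise ε (sh i f) (x + eb i) - Tnoise ε (sh i f) x := h2
      _ ≤ |Tnoise ε (sh i f) (x + eb i) - Tnoise ε (sh i f) x| := le_abs_self _
      _ = |Tnoise ε (sh i f) x - Tnoise ε (sh i f) (x + eb i)| := abs_sub_comm _ _
  · exact le_trans (D_abs_one ε i hε0 hε2 f x h) (le_abs_self _)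

lemma T_pair (f : Cube n → ℝ) (x : Cube n) :
    Tnoise ε (sh i f) x + Tnoise ε (sh i f) (x + eb i)
      = Tnoise ε f x + Tnoise ε f (x + eb i) := by
  have key : ∀ h : Cube n → ℝ, Tnoise ε h x + Tnoise ε h (x + eb i)
      = ∑ z : Cube n, wt ε z * (h (x + z) + h (x + z + eb i)) := by
    intro h
    rw [T_flip]
    unfold Tnoise
    rw [← sum_add_distrib]
    exact sum_congr rfl fun z _ => (mul_add _ _ _).symm
  rw [key, key]
  exact sum_congr rfl fun z _ => by rw [sh_pair]

lemma step_sum {Φ : ℝ → ℝ} (hΦ : ConvexOn ℝ Set.univ Φ) (hε0 : 0 ≤ ε) (hε2 : ε ≤ 1/2)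
    (f : Cube n → ℝ) :
    (∑ x : Cube n, Φ (Tnoise ε f x)) ≤ ∑ x : Cube n, Φ (Tnoise ε (sh i f) x) := by
  have hpair : ∀ x : Cube n, Φ (Tnoise ε f x) + Φ (Tnoise ε f (x + eb i))
      ≤ Φ (Tnoise ε (sh i f) x) + Φ (Tnoise ε (sh i f) (x + eb i)) := fun x =>
    pair_convex hΦ _ _ _ _ (T_pair ε i f x).symm (D_abs ε i hε0 hε2 f x)
  have hsum := Finset.sum_le_sum (fun x (_ : x ∈ univ) => hpair x)
  rw [sum_add_distrib, sum_add_distrib] at hsum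
  have hre1 : ∑ x : Cube n, Φ (Tnoise ε f (x + eb i)) = ∑ x : Cube n, Φ (Tnoise ε f x) :=
    Fintype.sum_bijective _ (bij_eb i) _ _ fun z => rfl
  have hre2 : ∑ x : Cube n, Φ (Tnoise ε (sh i f) (x + eb i))
      = ∑ x : Cube n, Φ (Tnoise ε (sh i f) x) :=
    Fintype.sum_bijective _ (bij_eb i) _ _ fun z => rfl
  rw [hre1, hre2] at hsum
  linarith

lemma sum_sh (f : Cube n → ℝ) : ∑ x : Cube n, sh i f x = ∑ x : Cube n, f x := by
  have h3 : ∑ x : Cube n, (sh i f x + sh i f (x + eb i)) = ∑ x : Cube n, (f x + f (x + eb i)) :=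
    sum_congr rfl fun x _ => sh_pair i f x
  rw [sum_add_distrib, sum_add_distrib] at h3
  have hre1 : ∑ x : Cube n, sh i f (x + eb i) = ∑ x : Cube n, sh i f x :=
    Fintype.sum_bijective _ (bij_eb i) _ _ fun z => rfl
  have hre2 : ∑ x : Cube n, f (x + eb i) = ∑ x : Cube n, f x :=
    Fintype.sum_bijective _ (bij_eb i) _ _ fun z => rfl
  rw [hre1, hre2] at h3
  linarith

end Noise

section Mu
variable {n : ℕ}

noncomputable def cwt (x : Cube n) : ℝ := ∑ j, ((x j).val : ℝ)

lemma cwt_nonneg (x : Cube n) : 0 ≤ cwt x :=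
  sum_nonneg fun j _ => by positivity

lemma cwt_flip (i : Fin n) (x : Cube n) :
    cwt (x + eb i) = cwt x + (if x i = 0 then 1 else -1) := by
  unfold cwt
  rw [← Finset.sum_erase_add univ _ (mem_univ i),
    ← Finset.sum_erase_add univ (fun j => ((x j).val : ℝ)) (mem_univ i)]
  have herase : ∑ j ∈ univ.erase i, (((x + eb i) j).val : ℝ)
      = ∑ j ∈ univ.erase i, ((x j).val : ℝ) :=
    sum_congr rfl fun j hj => by rw [add_eb_ne _ (mem_erase.mp hj).1]
  rw [herase]
  rcases zmod2_cases (x i) with h | h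
  · have e1 : ((x + eb i) i).val = 1 := by rw [add_eb_self, h]; decide
    have e2 : (x i).val = 0 := by rw [h]; decide
    rw [e1, e2, if_pos h]
    push_cast; ring
  · have e1 : ((x + eb i) i).val = 0 := by rw [add_eb_self, h]; decide
    have e2 : (x i).val = 1 := by rw [h]; decide
    rw [e1, e2, if_neg (by rw [h]; decide)]
    push_cast; ring

lemma mu_step (i : Fin n) (f : Cube n → ℝ) (x₀ : Cube n)
    (hx0 : x₀ i = 0) (h1 : f x₀ = 1) (h0 : f (x₀ + eb i) = 0) :
    (∑ x : Cube n, f x * cwt x) + 1/2 ≤ ∑ x : Cube n, sh i f x * cwt x := by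
  set g := sh i f with hg
  set t : Cube n → ℝ := fun x => (g x - f x) * cwt x with htdef
  have hpair : ∀ x : Cube n, g x + g (x + eb i) = f x + f (x + eb i) := sh_pair i f
  have hre : ∑ x : Cube n, t (x + eb i) = ∑ x : Cube n, t x :=
    Fintype.sum_bijective _ (bij_eb i) _ _ fun z => rfl
  have hnonneg : ∀ x : Cube n, 0 ≤ t x + t (x + eb i) := by
    intro x
    have hp := hpair x
    have hg2 : g (x + eb i) - f (x + eb i) = f x - g x := by linarith
    have hexp : t x + t (x + eb i) = (g x - f x) * cwt x + (f x - g x) * cwt (x + eb i) := by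
      simp only [htdef]
      rw [hg2]
    rcases zmod2_cases (x i) with h | h
    · have hgle : g x ≤ f x := by
        rw [hg]; unfold sh
        rw [if_neg (by rw [h]; decide)]
        exact min_le_left _ _
      have hcw : cwt (x + eb i) = cwt x + 1 := by rw [cwt_flip, if_pos h]
      rw [hexp, hcw]; nlinarith
    · have hgle : f x ≤ g x := by
        rw [hg]; unfold sh
        rw [if_pos h]
        exact le_max_left _ _
      have hcw : cwt (x + eb i) = cwt x + -1 := by rw [cwt_flip, if_neg (by rw [h]; decide)]
      rw [hexp, hcw]; nlinarith
  have hg0 : g x₀ = 0 := by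
    rw [hg]; unfold sh
    rw [if_neg (by rw [hx0]; decide), h1, h0]
    norm_num
  have hg1 : g (x₀ + eb i) = 1 := by have := hpair x₀; rw [hg0, h1, h0] at this; linarith
  have hcw0 : cwt (x₀ + eb i) = cwt x₀ + 1 := by rw [cwt_flip, if_pos hx0]
  have hx0term : 1 ≤ t x₀ + t (x₀ + eb i) := by
    simp only [htdef]
    rw [hg0, h1, hg1, h0, hcw0]
    ring_nf
    linarith
  have hsum1 : (1:ℝ) ≤ ∑ x : Cube n, (t x + t (x + eb i)) :=
    le_trans hx0term (Finset.single_le_sum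
      (fun x (_ : x ∈ univ) => hnonneg x) (mem_univ x₀))
  rw [sum_add_distrib, hre] at hsum1
  have hts : ∑ x : Cube n, t x = (∑ x : Cube n, g x * cwt x) - ∑ x : Cube n, f x * cwt x := by
    simp only [htdef, sub_mul]
    rw [sum_sub_distrib]
  linarith

lemma mu_le (f : Cube n → ℝ) (hf : ∀ x, f x = 0 ∨ f x = 1) :
    ∑ x : Cube n, f x * cwt x ≤ ∑ x : Cube n, cwt x := by
  refine sum_le_sum fun x _ => ?_
  rcases hf x with h | h <;> rw [h] <;> [skip; skip] <;>
    first
    | (rw [zero_mul]; exact cwt_nonneg x)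
    | (rw [one_mul])

lemma mu_nonneg (f : Cube n → ℝ) (hf : ∀ x, f x = 0 ∨ f x = 1) :
    0 ≤ ∑ x : Cube n, f x * cwt x := by
  refine sum_nonneg fun x _ => ?_
  rcases hf x with h | h <;> rw [h] <;> simp [cwt_nonneg x]

lemma cwt_le (x : Cube n) : cwt x ≤ n := by
  unfold cwt
  calc ∑ j, ((x j).val : ℝ) ≤ ∑ _j : Fin n, (1:ℝ) := by
        refine sum_le_sum fun j _ => ?_
        have := ZMod.val_lt (x j)
        have h1 : (x j).val ≤ 1 := by omega
        exact_mod_cast h1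
    _ = n := by simp

lemma B_le : ∑ x : Cube n, cwt x ≤ (Fintype.card (Cube n) : ℝ) * n := by
  calc ∑ x : Cube n, cwt x ≤ ∑ _x : Cube n, (n : ℝ) := sum_le_sum fun x _ => cwt_le x
    _ = (Fintype.card (Cube n) : ℝ) * n := by
        rw [sum_const, card_univ, nsmul_eq_mul]

end Mu

section Iter
variable {n : ℕ}

lemma not_mono_witness (f : Cube n → ℝ) (hf : ∀ x, f x = 0 ∨ f x = 1)
    (h : ¬ ∀ (x : Cube n) (i : Fin n), x i = 0 → f x ≤ f (x + eb i)) :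
    ∃ (x₀ : Cube n) (i : Fin n), x₀ i = 0 ∧ f x₀ = 1 ∧ f (x₀ + eb i) = 0 := by
  push_neg at h
  obtain ⟨x₀, i, hx0, hlt⟩ := h
  refine ⟨x₀, i, hx0, ?_, ?_⟩ <;>
    rcases hf x₀ with h1 | h1 <;> rcases hf (x₀ + eb i) with h2 | h2 <;>
      rw [h1, h2] at hlt <;> first | linarith | (rw [h1]) | (rw [h2])

lemma iterate {Φ : ℝ → ℝ} (hΦ : ConvexOn ℝ Set.univ Φ) {ε : ℝ}
    (hε0 : 0 ≤ ε) (hε2 : ε ≤ 1/2) :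
    ∀ k : ℕ, ∀ f : Cube n → ℝ, (∀ x, f x = 0 ∨ f x = 1) →
    (∑ x : Cube n, cwt x) ≤ (∑ x : Cube n, f x * cwt x) + (k : ℝ)/2 →
    ∃ g : Cube n → ℝ, (∀ x, g x = 0 ∨ g x = 1) ∧
      (∀ (x : Cube n) (i : Fin n), x i = 0 → g x ≤ g (x + eb i)) ∧
      (∑ x : Cube n, g x) = (∑ x : Cube n, f x) ∧
      (∑ x : Cube n, Φ (Tnoise ε f x)) ≤ ∑ x : Cube n, Φ (Tnoise ε g x) := by
  intro k
  induction k with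
  | zero =>
    intro f hf hμ
    by_cases hmono : ∀ (x : Cube n) (i : Fin n), x i = 0 → f x ≤ f (x + eb i)
    · exact ⟨f, hf, hmono, rfl, le_refl _⟩
    · exfalso
      obtain ⟨x₀, i, hx0, h1, h0⟩ := not_mono_witness f hf hmono
      have hstep := mu_step i f x₀ hx0 h1 h0
      have hle := mu_le (sh i f) (sh_boolean i f hf)
      norm_num at hμ
      linarith
  | succ k ih =>
    intro f hf hμ
    by_cases hmono : ∀ (x : Cube n) (i : Fin n), x i = 0 → f x ≤ f (x + eb i)
    · exact ⟨f, hf, hmono, rfl, le_refl _⟩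
    · obtain ⟨x₀, i, hx0, h1, h0⟩ := not_mono_witness f hf hmono
      have hstep := mu_step i f x₀ hx0 h1 h0
      have hμ' : (∑ x : Cube n, cwt x) ≤ (∑ x : Cube n, sh i f x * cwt x) + (k : ℝ)/2 := by
        push_cast at hμ ⊢
        linarith
      obtain ⟨g, hgB, hgM, hgE, hgI⟩ := ih (sh i f) (sh_boolean i f hf) hμ'
      exact ⟨g, hgB, hgM, hgE.trans (sum_sh i f),
        le_trans (step_sum ε i hΦ hε0 hε2 f) hgI⟩

lemma mono_of_coord (g : Cube n → ℝ)
    (hg : ∀ (x : Cube n) (i : Fin n), x i = 0 → g x ≤ g (x + eb i)) :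
    ∀ x y : Cube n, (∀ i, (x i).val ≤ (y i).val) → g x ≤ g y := by
  suffices H : ∀ k : ℕ, ∀ x y : Cube n, (∀ i, (x i).val ≤ (y i).val) →
      (univ.filter fun i => x i ≠ y i).card ≤ k → g x ≤ g y by
    intro x y h
    exact H _ x y h le_rfl
  intro k
  induction k with
  | zero =>
    intro x y h hc
    have hxy : x = y := by
      funext j
      by_contra hj
      have hmem : j ∈ univ.filter fun i => x i ≠ y i := mem_filter.mpr ⟨mem_univ _, hj⟩
      rw [Nat.le_zero, card_eq_zero] at hc
      rw [hc] at hmem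
      exact absurd hmem (notMem_empty j)
    rw [hxy]
  | succ k ih =>
    intro x y h hc
    by_cases hxy : x = y
    · rw [hxy]
    · have hne : (univ.filter fun i => x i ≠ y i).Nonempty := by
        by_contra hemp
        rw [not_nonempty_iff_eq_empty] at hemp
        apply hxy
        funext j
        by_contra hj
        have hmem : j ∈ univ.filter fun i => x i ≠ y i := mem_filter.mpr ⟨mem_univ _, hj⟩
        rw [hemp] at hmem
        exact absurd hmem (notMem_empty j)
      obtain ⟨i, hi⟩ := hne
      have hi' : x i ≠ y i := (mem_filter.mp hi).2
      have hx0 : x i = 0 ∧ y i = 1 := by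
        have hv := h i
        rcases zmod2_cases (x i) with h1 | h1 <;> rcases zmod2_cases (y i) with h2 | h2 <;>
          rw [h1, h2] at hi' hv ⊢ <;> simp_all <;> exact absurd hv (by decide)
      have hstep : g x ≤ g (x + eb i) := hg x i hx0.1
      have hval : ∀ j, ((x + eb i) j).val ≤ (y j).val := by
        intro j
        by_cases hj : j = i
        · subst hj
          rw [add_eb_self, hx0.1, hx0.2]
          decide
        · rw [add_eb_ne _ hj]
          exact h j
      have hcard : (univ.filter fun j => (x + eb i) j ≠ y j).card ≤ k := by
        have hsub : (univ.filter fun j => (x + eb i) j ≠ y j)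
            ⊆ (univ.filter fun j => x j ≠ y j).erase i := by
          intro j hj
          have hj2 := (mem_filter.mp hj).2
          rw [mem_erase]
          constructor
          · rintro rfl
            apply hj2
            rw [add_eb_self, hx0.1, hx0.2]
            decide
          · refine mem_filter.mpr ⟨mem_univ _, ?_⟩
            intro hxy2
            apply hj2
            by_cases hji : j = i
            · subst hji
              rw [add_eb_self, hx0.1, hx0.2]
              decide
            · rw [add_eb_ne _ hji, hxy2]
        have hle := card_le_card hsub
        rw [card_erase_of_mem hi] at hle
        omega
      exact hstep.trans (ih (x + eb i) y hval hcard)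

end Iter

/-- for convex Φ, E[Φ(T_ε f)] is maximized by some monotone function
with the same mean. -/
theorem exists_monotone_maximizer (n : ℕ) (Φ : ℝ → ℝ) (hΦ : ConvexOn ℝ Set.univ Φ)
    (ε : ℝ) (hε : ε ∈ Set.Icc (0:ℝ) (1/2))
    (f : Cube n → ℝ) (hf : ∀ x, f x = 0 ∨ f x = 1) :
    ∃ g : Cube n → ℝ, (∀ x, g x = 0 ∨ g x = 1) ∧
      (∀ x y : Cube n, (∀ i, (x i).val ≤ (y i).val) → g x ≤ g y) ∧
      EE g = EE f ∧
      EE (fun x => Φ (Tnoise ε f x)) ≤ EE (fun x => Φ (Tnoise ε g x)) := by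
  obtain ⟨hε0, hε2⟩ := hε
  have hfuel : (∑ x : Cube n, cwt x)
      ≤ (∑ x : Cube n, f x * cwt x) + ((2 * n * Fintype.card (Cube n) : ℕ) : ℝ)/2 := by
    have h1 := B_le (n := n)
    have h2 := mu_nonneg f hf
    push_cast
    linarith
  obtain ⟨g, hgB, hgM, hgE, hgI⟩ := iterate hΦ hε0 hε2 (2 * n * Fintype.card (Cube n)) f hf hfuel
  refine ⟨g, hgB, mono_of_coord g hgM, ?_, ?_⟩
  · unfold EE
    rw [hgE]
  · unfold EE
    gcongr
end
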